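/- Let A be an abelian length category (every object has a finite composition series) with only finitely many simple objects up to isomorphism. Let Z be an assignment of a complex number Z(M) to each object M of A which is additive on short exact sequences (Z(E) = Z(A) + Z(B) whenever 0 → A → E → B → 0 is exact) and satisfies Z(S) ∈ ℍ = {r e^{iπθ} : r ∈ ℝ_{>0}, 0 < θ ≤ 1} for every simple object S. Then: (i) Z(M) ∈ ℍ for every nonzero object M, so Z is a stability function on A; and (ii) Z satisfies the HN-property: every nonzero object M admits a filtration 0 = M_0 ⊂ M_1 ⊂ ⋯ ⊂ M_k = M by subobjects whose successive quotients L_i = M_i/M_{i-1} are Z-semistable with strictly decreasing phases φ(L_1) > φ(L_2) > ⋯ > φ(L_k). -/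

import Mathlib

open CategoryTheory CategoryTheory.Limits
set_option linter.unusedSectionVars false
set_option linter.unusedVariables false
set_option maxHeartbeats 1000000

/-- The semi-closed upper half-plane `ℍ = {r e^{iπθ} : r > 0, 0 < θ ≤ 1}`. -/
def upperHalfPlaneH : Set ℂ :=
  {z | ∃ r θ : ℝ, 0 < r ∧ 0 < θ ∧ θ ≤ 1 ∧
    z = (r : ℂ) * Complex.exp (θ * Real.pi * Complex.I)}

/-- The phase of a complex number: for `z = r e^{iπθ} ∈ ℍ` with `0 < θ ≤ 1` this is `θ`. -/
noncomputable def phase (z : ℂ) : ℝ := z.arg / Real.pi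

variable {A : Type*} [Category A] [Abelian A]

/-- An object `M` is semistable with respect to `Z` if it is nonzero and every nonzero
subobject `L ⊆ M` satisfies `φ(L) ≤ φ(M)`. -/
def IsSemistable (Z : A → ℂ) (M : A) : Prop :=
  ¬ IsZero M ∧ ∀ (L : A) (f : L ⟶ M), Mono f → ¬ IsZero L → phase (Z L) ≤ phase (Z M)

namespace HNAux

lemma memH_iff {z : ℂ} : z ∈ upperHalfPlaneH ↔ 0 < z.arg := by
  constructor
  · rintro ⟨r, θ, hr, hθ0, hθ1, rfl⟩
    have hπ := Real.pi_pos
    rw [show ((θ : ℂ) * (Real.pi:ℂ) * Complex.I) = ((θ * Real.pi : ℝ) : ℂ) * Complex.I by push_cast; ring]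
    rw [Complex.exp_mul_I, Complex.arg_real_mul _ hr,
      Complex.arg_cos_add_sin_mul_I ⟨by nlinarith, by nlinarith⟩]
    exact mul_pos hθ0 hπ
  · intro h
    have hz : z ≠ 0 := by
      intro hz; rw [hz] at h; simp [Complex.arg_zero] at h
    refine ⟨‖z‖, z.arg / Real.pi, norm_pos_iff.mpr hz, div_pos h Real.pi_pos, ?_, ?_⟩
    · rw [div_le_one Real.pi_pos]; exact Complex.arg_le_pi z
    · rw [show ((z.arg / Real.pi : ℝ) : ℂ) * (Real.pi:ℂ) * Complex.I = ((z.arg : ℝ):ℂ) * Complex.I by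
        rw [← Complex.ofReal_mul, div_mul_cancel₀ _ (ne_of_gt Real.pi_pos)]]
      exact (Complex.norm_mul_exp_arg_mul_I z).symm

lemma memH_add {z w : ℂ} (hz : z ∈ upperHalfPlaneH) (hw : w ∈ upperHalfPlaneH) :
    z + w ∈ upperHalfPlaneH := by
  rw [memH_iff] at hz hw ⊢
  have hz' := Complex.arg_nonneg_iff.mp hz.le
  have hw' := Complex.arg_nonneg_iff.mp hw.le
  rcases lt_or_eq_of_le hz' with h | h
  · have : 0 < (z + w).im := by simp [Complex.add_im]; linarith
    have := Complex.arg_nonneg_iff.mpr (le_of_lt this)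
    rcases lt_or_eq_of_le this with h' | h'
    · exact h'
    · exfalso
      have := Complex.arg_eq_zero_iff.mp h'.symm
      simp [Complex.add_im] at this
      linarith
  · -- z.im = 0, so z.re < 0
    have hzre : z.re < 0 := by
      by_contra hre
      push_neg at hre
      have : z.arg = 0 := Complex.arg_eq_zero_iff.mpr ⟨hre, h.symm⟩
      linarith
    rcases lt_or_eq_of_le hw' with h2 | h2
    · have him : 0 < (z + w).im := by simp [Complex.add_im]; linarith
      rcases lt_or_eq_of_le (Complex.arg_nonneg_iff.mpr him.le) with h' | h'
      · exact h'
      · exfalso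
        have := Complex.arg_eq_zero_iff.mp h'.symm
        linarith [this.2, him]
    · have hwre : w.re < 0 := by
        by_contra hre
        push_neg at hre
        have : w.arg = 0 := Complex.arg_eq_zero_iff.mpr ⟨hre, h2.symm⟩
        linarith
      have h1 : (z + w).im = 0 := by simp [Complex.add_im]; linarith
      have h2' : (z + w).re < 0 := by simp [Complex.add_re]; linarith
      rcases lt_or_eq_of_le (Complex.arg_nonneg_iff.mpr h1.ge) with h' | h'
      · exact h'
      · exfalso
        have := Complex.arg_eq_zero_iff.mp h'.symm
        linarith [this.1]

/-- cross product of two complex numbers -/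
def cross (z w : ℂ) : ℝ := z.re * w.im - z.im * w.re

lemma cross_eq {z w : ℂ} (hz : z ≠ 0) (hw : w ≠ 0) :
    cross z w = ‖z‖ * ‖w‖ * Real.sin (w.arg - z.arg) := by
  have h1 : Real.cos z.arg = z.re / ‖z‖ := Complex.cos_arg hz
  have h2 : Real.sin z.arg = z.im / ‖z‖ := Complex.sin_arg z
  have h3 : Real.cos w.arg = w.re / ‖w‖ := Complex.cos_arg hw
  have h4 : Real.sin w.arg = w.im / ‖w‖ := Complex.sin_arg w
  have haz : (‖z‖ : ℝ) ≠ 0 := by simpa using hz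
  have haw : (‖w‖ : ℝ) ≠ 0 := by simpa using hw
  rw [Real.sin_sub, h2, h4, h1, h3]
  field_simp [cross]
  unfold cross
  ring

lemma arg_lt_arg_iff {z w : ℂ} (hz : z ∈ upperHalfPlaneH) (hw : w ∈ upperHalfPlaneH) :
    z.arg < w.arg ↔ 0 < cross z w := by
  rw [memH_iff] at hz hw
  have hz0 : z ≠ 0 := fun h => by rw [h] at hz; simp at hz
  have hw0 : w ≠ 0 := fun h => by rw [h] at hw; simp at hw
  rw [cross_eq hz0 hw0]
  have hza := Complex.arg_le_pi z
  have hwa := Complex.arg_le_pi w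
  have habs : (0:ℝ) < ‖z‖ * ‖w‖ := by
    have := norm_pos_iff.mpr hz0
    have := norm_pos_iff.mpr hw0
    positivity
  constructor
  · intro h
    have : 0 < Real.sin (w.arg - z.arg) :=
      Real.sin_pos_of_pos_of_lt_pi (by linarith) (by linarith)
    positivity
  · intro h
    by_contra hc
    push_neg at hc
    have : Real.sin (w.arg - z.arg) ≤ 0 :=
      Real.sin_nonpos_of_nonpos_of_neg_pi_le (by linarith) (by linarith)
    nlinarith

lemma arg_le_arg_iff {z w : ℂ} (hz : z ∈ upperHalfPlaneH) (hw : w ∈ upperHalfPlaneH) :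
    z.arg ≤ w.arg ↔ 0 ≤ cross z w := by
  have h := arg_lt_arg_iff hw hz
  have hcross : cross w z = - cross z w := by simp [cross]; ring
  constructor
  · intro hle
    by_contra hc
    push_neg at hc
    have : w.arg < z.arg := by rw [h, hcross]; linarith
    linarith
  · intro hc
    by_contra hlt
    push_neg at hlt
    have := (h.mp hlt)
    rw [hcross] at this
    linarith

lemma phase_lt_phase_iff {z w : ℂ} (hz : z ∈ upperHalfPlaneH) (hw : w ∈ upperHalfPlaneH) :
    phase z < phase w ↔ 0 < cross z w := by
  unfold phase
  rw [div_lt_div_iff_of_pos_right Real.pi_pos]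
  exact arg_lt_arg_iff hz hw

lemma phase_le_phase_iff {z w : ℂ} (hz : z ∈ upperHalfPlaneH) (hw : w ∈ upperHalfPlaneH) :
    phase z ≤ phase w ↔ 0 ≤ cross z w := by
  unfold phase
  rw [div_le_div_iff_of_pos_right Real.pi_pos]
  exact arg_le_arg_iff hz hw

lemma cross_add_right (z w : ℂ) : cross z (z + w) = cross z w := by
  simp [cross, Complex.add_re, Complex.add_im]; ring

lemma cross_add_left (z w : ℂ) : cross (z + w) w = cross z w := by
  simp [cross, Complex.add_re, Complex.add_im]; ring

lemma phase_lt_add {z w : ℂ} (hz : z ∈ upperHalfPlaneH) (hw : w ∈ upperHalfPlaneH)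
    (h : phase z < phase w) : phase z < phase (z + w) := by
  rw [phase_lt_phase_iff hz (memH_add hz hw), cross_add_right]
  exact (phase_lt_phase_iff hz hw).mp h

lemma phase_add_eq {z w : ℂ} (hz : z ∈ upperHalfPlaneH) (hw : w ∈ upperHalfPlaneH)
    (h : phase z = phase w) : phase (z + w) = phase z := by
  have h1 : phase z ≤ phase (z + w) := by
    rw [phase_le_phase_iff hz (memH_add hz hw), cross_add_right]
    exact (phase_le_phase_iff hz hw).mp h.le
  have h2 : phase (z + w) ≤ phase z := by
    have : phase (z + w) ≤ phase w := by
      rw [phase_le_phase_iff (memH_add hz hw) hw, cross_add_left]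
      exact (phase_le_phase_iff hz hw).mp h.le
    linarith [this, h.ge]
  linarith


section Cat

open ZeroObject

variable {A : Type*} [Category A] [Abelian A]

attribute [local instance] CategoryTheory.Abelian.Pseudoelement.objectToSort
  CategoryTheory.Abelian.Pseudoelement.overToSort
  CategoryTheory.Abelian.Pseudoelement.homToFun

lemma mono_of_isZero_src {X Y : A} (hX : IsZero X) (f : X ⟶ Y) : Mono f :=
  ⟨fun u v _ => hX.eq_of_tgt u v⟩

lemma ses_of_iso {O X Y : A} (hO : IsZero O) (f : O ⟶ X) (g : X ⟶ Y) [IsIso g] :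
    ∃ w : f ≫ g = 0, (ShortComplex.mk f g w).ShortExact := by
  have hf : f = 0 := hO.eq_of_src f 0
  have w : f ≫ g = 0 := by rw [hf, zero_comp]
  refine ⟨w, ShortComplex.ShortExact.mk' ?_ (mono_of_isZero_src hO f) inferInstance⟩
  exact (ShortComplex.exact_iff_mono _ hf).mpr inferInstance

lemma ses_cokernel {X Y : A} (f : X ⟶ Y) [Mono f] :
    (ShortComplex.mk f (cokernel.π f) (cokernel.condition f)).ShortExact :=
  ShortComplex.ShortExact.mk'
    (ShortComplex.exact_of_g_is_cokernel _ (cokernelIsCokernel f)) inferInstance inferInstance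

lemma isZero_of_mono_zero {X Y : A} (f : X ⟶ Y) (hm : Mono f) (hf : f = 0) : IsZero X := by
  rw [IsZero.iff_id_eq_zero]
  have : 𝟙 X ≫ f = 0 ≫ f := by rw [hf]; simp
  exact (cancel_mono f).1 this

lemma isZero_of_epi_zero {X Y : A} (f : X ⟶ Y) (he : Epi f) (hf : f = 0) : IsZero Y := by
  rw [IsZero.iff_id_eq_zero]
  have : f ≫ 𝟙 Y = f ≫ 0 := by rw [hf]; simp
  exact (cancel_epi f).1 this

/-- chains of subobjects with prescribed quotients, from bottom (zero) to top -/
inductive Chain : A → List A → Prop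
  | nil (X : A) (h : IsZero X) : Chain X []
  | cons {X Y L : A} {ls : List A} (f : X ⟶ Y) (g : Y ⟶ L) (w : f ≫ g = 0)
      (hse : (ShortComplex.mk f g w).ShortExact) (hc : Chain X ls) : Chain Y (ls ++ [L])

lemma chain_cases {Y : A} {l : List A} (h : Chain Y l) :
    (l = [] ∧ IsZero Y) ∨
    ∃ (X : A) (ls : List A) (L : A) (f : X ⟶ Y) (g : Y ⟶ L) (w : f ≫ g = 0),
      l = ls ++ [L] ∧ (ShortComplex.mk f g w).ShortExact ∧ Chain X ls := by
  cases h with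
  | nil _ h0 => exact Or.inl ⟨rfl, h0⟩
  | cons f g w hse hc => exact Or.inr ⟨_, _, _, f, g, w, rfl, hse, hc⟩

lemma chain_nil_isZero {Y : A} (h : Chain Y []) : IsZero Y := by
  rcases chain_cases h with ⟨_, h0⟩ | ⟨X, ls, L, f, g, w, habs, _, _⟩
  · exact h0
  · exact absurd habs (by simp)

lemma chain_iso {X Y : A} {l : List A} (hc : Chain X l) (e : X ≅ Y) : Chain Y l := by
  rcases chain_cases hc with ⟨rfl, h0⟩ | ⟨W, ls, L, f, g, w, rfl, hse, hc'⟩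
  · exact Chain.nil Y (IsZero.of_iso h0 e.symm)
  · have w' : (f ≫ e.hom) ≫ (e.inv ≫ g) = 0 := by
      rw [Category.assoc, Iso.hom_inv_id_assoc, w]
    refine Chain.cons (f ≫ e.hom) (e.inv ≫ g) w' ?_ hc'
    refine ShortComplex.shortExact_of_iso ?_ hse
    exact ShortComplex.isoMk (Iso.refl _) e (Iso.refl _) (by simp) (by simp)

lemma chain_snoc_inv {Y : A} {l : List A} {L : A} (h : Chain Y (l ++ [L])) :
    ∃ (X : A) (f : X ⟶ Y) (g : Y ⟶ L) (w : f ≫ g = 0),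
      (ShortComplex.mk f g w).ShortExact ∧ Chain X l := by
  rcases chain_cases h with ⟨habs, _⟩ | ⟨X, ls, L', f, g, w, heq, hse, hc⟩
  · exact absurd habs (by simp)
  · obtain ⟨h1, h2⟩ := List.append_inj' heq rfl
    obtain rfl : L' = L := by simpa using h2.symm
    obtain rfl : ls = l := h1.symm

    exact ⟨X, f, g, w, hse, hc⟩

lemma chain_append {Y : A} (l₂ : List A) {l₁ : List A} (h : Chain Y (l₁ ++ l₂)) :
    ∃ (X : A) (m : X ⟶ Y), Mono m ∧ Chain X l₁ := by
  induction l₂ using List.reverseRecOn generalizing Y with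
  | nil => exact ⟨Y, 𝟙 Y, inferInstance, by simpa using h⟩
  | append_singleton l₂' L ih =>
    rw [← List.append_assoc] at h
    obtain ⟨X, f, g, w, hse, hc⟩ := chain_snoc_inv h
    obtain ⟨W, m, hm, hcW⟩ := ih hc
    haveI := hse.mono_f
    exact ⟨W, m ≫ f, mono_comp _ _, hcW⟩

section ZFacts

variable (Z : A → ℂ)
variable (hadd : ∀ (X E Y : A) (f : X ⟶ E) (g : E ⟶ Y) (w : f ≫ g = 0),
      (ShortComplex.mk f g w).ShortExact → Z E = Z X + Z Y)

include hadd

lemma Z_isZero {X : A} (hX : IsZero X) : Z X = 0 := by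
  obtain ⟨w, hse⟩ := ses_of_iso hX (0 : X ⟶ X) (𝟙 X)
  have := hadd _ _ _ _ _ w hse
  linear_combination -this

lemma Z_iso {X Y : A} (e : X ≅ Y) : Z X = Z Y := by
  obtain ⟨w, hse⟩ := ses_of_iso (isZero_zero A) (0 : 0 ⟶ X) e.hom
  have := hadd _ _ _ _ _ w hse
  rw [this, Z_isZero Z hadd (isZero_zero A), zero_add]

lemma chain_Z {X : A} {l : List A} (hc : Chain X l) : Z X = (l.map Z).sum := by
  induction hc with
  | nil X h0 => simpa using Z_isZero Z hadd h0
  | cons f g w hse hc ih =>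
    rw [hadd _ _ _ _ _ w hse, ih]
    simp

end ZFacts

end Cat


section Cat2

open ZeroObject

variable {A : Type*} [Category A] [Abelian A]

noncomputable def pullback_fst_isKernel {X M Y B : A} (f : X ⟶ M) (π : M ⟶ Y) (κ : B ⟶ M) [Mono κ]
    (w : κ ≫ π = 0) (hκ : IsLimit (KernelFork.ofι κ w)) :
    IsLimit (KernelFork.ofι (pullback.fst f κ)
      (show pullback.fst f κ ≫ f ≫ π = 0 by
        rw [← Category.assoc, pullback.condition, Category.assoc, w, comp_zero])) := by
  apply KernelFork.IsLimit.ofι'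
  intro T t ht
  have h2 : (t ≫ f) ≫ π = 0 := by rw [Category.assoc]; exact ht
  obtain ⟨u, hu⟩ := KernelFork.IsLimit.lift' hκ (t ≫ f) h2
  exact ⟨pullback.lift t u hu.symm, pullback.lift_fst _ _ _⟩

noncomputable def pullback_lift_isKernel {B M Y X : A} (κ : B ⟶ M) (π : M ⟶ Y) (w : κ ≫ π = 0) [Mono κ]
    (hκ : IsLimit (KernelFork.ofι κ w)) (f : X ⟶ Y) :
    IsLimit (KernelFork.ofι
      (pullback.lift κ (0 : B ⟶ X) (by rw [w, zero_comp]) : B ⟶ pullback π f)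
      (by rw [pullback.lift_snd])) := by
  haveI : Mono (pullback.lift κ (0 : B ⟶ X) (by rw [w, zero_comp]) : B ⟶ pullback π f) :=
    mono_of_mono_fac (pullback.lift_fst _ _ _)
  apply KernelFork.IsLimit.ofι'
  intro T t ht
  have h2 : (t ≫ pullback.fst π f) ≫ π = 0 := by
    rw [Category.assoc, pullback.condition, ← Category.assoc, ht, zero_comp]
  obtain ⟨u, hu⟩ := KernelFork.IsLimit.lift' hκ _ h2
  refine ⟨u, ?_⟩
  apply pullback.hom_ext
  · rw [Category.assoc, pullback.lift_fst]; simpa using hu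
  · rw [Category.assoc, pullback.lift_snd, comp_zero]; exact ht.symm

lemma shortExact_of_kernel {B M Y : A} (κ : B ⟶ M) (π : M ⟶ Y) (w : κ ≫ π = 0) [Mono κ] [Epi π]
    (h : IsLimit (KernelFork.ofι κ w)) : (ShortComplex.mk κ π w).ShortExact :=
  ShortComplex.ShortExact.mk' (ShortComplex.exact_of_f_is_kernel _ h) inferInstance inferInstance

lemma chain_pullback {Y : A} {l : List A} (hc : Chain Y l) :
    ∀ {B M : A} (κ : B ⟶ M) (π : M ⟶ Y) (w : κ ≫ π = 0),
      (ShortComplex.mk κ π w).ShortExact → Chain M (B :: l) := by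
  induction hc with
  | nil Y h0 =>
    intro B M κ π w hse
    haveI := hse.mono_f
    have hπ0 : π = 0 := h0.eq_of_tgt π 0
    haveI : Epi κ := (ShortComplex.exact_iff_epi _ hπ0).mp hse.exact
    haveI : IsIso κ := isIso_of_mono_of_epi κ
    obtain ⟨w', hse'⟩ := ses_of_iso (isZero_zero A) (0 : (0:A) ⟶ M) (asIso κ).inv
    exact Chain.cons _ _ w' hse' (Chain.nil _ (isZero_zero A))
  | cons f g w hse hc ih =>
    intro B M κ π w' hse'
    haveI := hse.mono_f; haveI := hse.epi_g; haveI := hse'.mono_f; haveI := hse'.epi_g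
    have hκker : IsLimit (KernelFork.ofι κ w') := hse'.fIsKernel
    have hkerP := pullback_lift_isKernel κ π w' hκker f
    haveI : Mono (pullback.lift κ (0 : B ⟶ _) (by rw [w', zero_comp]) : B ⟶ pullback π f) :=
      mono_of_mono_fac (pullback.lift_fst _ _ _)
    have hseP : (ShortComplex.mk
        (pullback.lift κ (0 : B ⟶ _) (by rw [w', zero_comp]) : B ⟶ pullback π f)
        (pullback.snd π f) (by rw [pullback.lift_snd])).ShortExact :=
      shortExact_of_kernel _ _ _ hkerP
    have hchainP : Chain (pullback π f) (B :: _) := ih _ _ _ hseP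
    have hfker : IsLimit (KernelFork.ofι f w) := hse.fIsKernel
    have hkerT := pullback_fst_isKernel π g f w hfker
    have hseT : (ShortComplex.mk (pullback.fst π f) (π ≫ g)
        (show pullback.fst π f ≫ π ≫ g = 0 by
          rw [← Category.assoc, pullback.condition, Category.assoc, w, comp_zero])).ShortExact :=
      shortExact_of_kernel _ _ _ hkerT
    have := Chain.cons _ _ _ hseT hchainP
    simpa using this

end Cat2


section Cat3

open ZeroObject CategoryTheory.Abelian

variable {A : Type*} [Category A] [Abelian A]

attribute [local instance] CategoryTheory.Abelian.Pseudoelement.objectToSort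
  CategoryTheory.Abelian.Pseudoelement.overToSort
  CategoryTheory.Abelian.Pseudoelement.homToFun

lemma sup_chain {Y : A} {l : List A} (hc : Chain Y l) :
    (∀ a ∈ l, Simple a) → ∀ {B Q : A} (κ : B ⟶ Y) (π : Y ⟶ Q) (w : κ ≫ π = 0),
      (ShortComplex.mk κ π w).ShortExact →
      ∃ lB lQ, Chain B lB ∧ Chain Q lQ ∧ lB.length + lQ.length = l.length ∧
        (∀ a ∈ lB, ∃ b ∈ l, Nonempty (a ≅ b)) ∧ (∀ a ∈ lQ, ∃ b ∈ l, Nonempty (a ≅ b)) := by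
  induction hc with
  | nil Y h0 =>
    intro _ B Q κ π w' hse'
    haveI := hse'.mono_f; haveI := hse'.epi_g
    refine ⟨[], [], Chain.nil _ (IsZero.of_mono κ h0), Chain.nil _ (IsZero.of_epi π h0),
      by simp, by simp, by simp⟩
  | cons f g w hse hc ih =>
    intro hsimp B Q κ π w' hse'
    rename_i X Y' Lq ls
    haveI := hse.mono_f; haveI := hse.epi_g; haveI := hse'.mono_f; haveI := hse'.epi_g
    -- intersection B' = X ∩ B as pullback
    set fst' : pullback f κ ⟶ X := pullback.fst f κ with hfst'
    set snd' : pullback f κ ⟶ B := pullback.snd f κ with hsnd'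
    -- image Q' of X in Q
    set Q' : A := Abelian.image (f ≫ π) with hQ'
    set e' : X ⟶ Q' := Abelian.factorThruImage (f ≫ π) with he'
    set m' : Q' ⟶ Q := Abelian.image.ι (f ≫ π) with hm'
    have hfac : e' ≫ m' = f ≫ π := Abelian.image.fac (f ≫ π)
    have hκker : IsLimit (KernelFork.ofι κ w') := hse'.fIsKernel
    have hker1 := pullback_fst_isKernel f π κ w' hκker
    have hw1 : fst' ≫ f ≫ π = 0 := by
      rw [hfst', ← Category.assoc, pullback.condition, Category.assoc, w', comp_zero]
    have hfst_e' : fst' ≫ e' = 0 := by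
      apply zero_of_comp_mono m'
      rw [Category.assoc, hfac, hw1]
    have hker2 : IsLimit (KernelFork.ofι fst' hfst_e') := by
      apply KernelFork.IsLimit.ofι'
      intro T t ht
      have h2 : t ≫ f ≫ π = 0 := by
        rw [← hfac, ← Category.assoc, ht, zero_comp]
      obtain ⟨u, hu⟩ := KernelFork.IsLimit.lift' hker1 t h2
      exact ⟨u, hu⟩
    have hseB'X : (ShortComplex.mk fst' e' hfst_e').ShortExact :=
      shortExact_of_kernel _ _ _ hker2
    have hsimp_ls : ∀ a ∈ ls, Simple a := fun a ha => hsimp a (by simp [ha])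
    obtain ⟨lB', lQ', hcB', hcQ', hlen, hisoB, hisoQ⟩ := ih hsimp_ls fst' e' hfst_e' hseB'X
    -- the two cokernels
    have hsndu : snd' ≫ (κ ≫ g) = 0 := by
      rw [← Category.assoc, hsnd', ← pullback.condition, Category.assoc, w, comp_zero]
    set u : cokernel snd' ⟶ Lq := cokernel.desc snd' (κ ≫ g) hsndu with hu
    have hgcoker : IsColimit (CokernelCofork.ofπ g w) := hse.gIsCokernel
    have hfd : f ≫ (π ≫ cokernel.π m') = 0 := by
      rw [← Category.assoc, ← hfac, Category.assoc, cokernel.condition, comp_zero]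
    obtain ⟨v, hgv₀⟩ := CokernelCofork.IsColimit.desc' hgcoker (π ≫ cokernel.π m') hfd
    have hgv : g ≫ v = π ≫ cokernel.π m' := by simpa using hgv₀
    haveI : Mono u := by
      apply Pseudoelement.mono_of_zero_of_map_zero
      intro c hc0
      obtain ⟨b, rfl⟩ := Pseudoelement.pseudo_surjective_of_epi (cokernel.π snd') c
      have h1 : g (κ b) = 0 := by
        rw [← Pseudoelement.comp_apply]
        have h1' : (cokernel.π snd' ≫ u) b = 0 := by
          rw [Pseudoelement.comp_apply]; exact hc0
        rw [hu, cokernel.π_desc] at h1'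
        exact h1'
      obtain ⟨x, hx⟩ := Pseudoelement.pseudo_exact_of_exact hse.exact (κ b) h1
      obtain ⟨s, hs1, hs2⟩ := Pseudoelement.pseudo_pullback (show f x = κ b from hx)
      rw [← hs2, ← Pseudoelement.comp_apply, hsnd', cokernel.condition]
      exact Pseudoelement.zero_apply _ _
    have huv : u ≫ v = 0 := by
      have h2 : cokernel.π snd' ≫ u ≫ v = cokernel.π snd' ≫ 0 := by
        rw [comp_zero, ← Category.assoc, hu, cokernel.π_desc, Category.assoc, hgv,
          ← Category.assoc, w', zero_comp]
      exact (cancel_epi (cokernel.π snd')).1 h2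
    have hexuv : (ShortComplex.mk u v huv).Exact := by
      apply Pseudoelement.exact_of_pseudo_exact
      intro b hb
      obtain ⟨m, rfl⟩ := Pseudoelement.pseudo_surjective_of_epi g b
      have h1 : (cokernel.π m') (π m) = 0 := by
        rw [← Pseudoelement.comp_apply, ← hgv, Pseudoelement.comp_apply]
        exact hb
      obtain ⟨q', hq'⟩ := Pseudoelement.pseudo_exact_of_exact (ses_cokernel m').exact (π m) h1
      obtain ⟨x, hx⟩ := Pseudoelement.pseudo_surjective_of_epi e' q'
      have h2 : π m = π (f x) := by
        rw [← Pseudoelement.comp_apply, ← hfac, Pseudoelement.comp_apply, hx, hq']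
      obtain ⟨z, hz0, hzp⟩ := Pseudoelement.sub_of_eq_image π m (f x) h2
      obtain ⟨b₀, hb₀⟩ := Pseudoelement.pseudo_exact_of_exact hse'.exact z hz0
      refine ⟨(cokernel.π snd') b₀, ?_⟩
      have h3 : g (f x) = 0 := by
        rw [← Pseudoelement.comp_apply, w]
        exact Pseudoelement.zero_apply _ _
      calc u ((cokernel.π snd') b₀) = (cokernel.π snd' ≫ u) b₀ :=
            (Pseudoelement.comp_apply _ _ _).symm
        _ = (κ ≫ g) b₀ := by rw [hu, cokernel.π_desc]
        _ = g (κ b₀) := Pseudoelement.comp_apply _ _ _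
        _ = g z := by rw [hb₀]
        _ = g m := hzp _ g h3
    haveI : Epi v := by
      haveI : Epi (π ≫ cokernel.π m') := epi_comp _ _
      exact epi_of_epi_fac hgv
    haveI hLq : Simple Lq := hsimp Lq (by simp)
    by_cases hu0 : u = 0
    · -- C = 0, first quotient dies : B ≅ B', Q gets the simple quotient
      have hCzero : IsZero (cokernel snd') := isZero_of_mono_zero u ‹Mono u› hu0
      haveI : Epi snd' := by
        apply Pseudoelement.epi_of_pseudo_surjective
        intro b
        have hzb : (cokernel.π snd') b = 0 := by
          have h0 : 𝟙 (cokernel snd') = 0 := (IsZero.iff_id_eq_zero _).1 hCzero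
          calc (cokernel.π snd') b = (cokernel.π snd' ≫ 𝟙 _) b := by rw [Category.comp_id]
            _ = (cokernel.π snd' ≫ (0 : cokernel snd' ⟶ cokernel snd')) b := by rw [h0]
            _ = 0 := by rw [comp_zero]; exact Pseudoelement.zero_apply _ _
        exact Pseudoelement.pseudo_exact_of_exact (ses_cokernel snd').exact b hzb
      haveI : IsIso snd' := isIso_of_mono_of_epi snd'
      haveI : Mono v := by
        apply Pseudoelement.mono_of_zero_of_map_zero
        intro a ha
        obtain ⟨c, hc⟩ := Pseudoelement.pseudo_exact_of_exact hexuv a ha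
        rw [← hc]
        show Pseudoelement.pseudoApply u c = 0
        rw [hu0]
        exact Pseudoelement.zero_apply _ _
      haveI : IsIso v := isIso_of_mono_of_epi v
      have hcB : Chain B lB' := chain_iso hcB' (asIso snd')
      have wQ : m' ≫ (cokernel.π m' ≫ (asIso v).inv) = 0 := by
        rw [← Category.assoc, cokernel.condition, zero_comp]
      have hseQ : (ShortComplex.mk m' (cokernel.π m' ≫ (asIso v).inv) wQ).ShortExact := by
        refine ShortComplex.shortExact_of_iso ?_ (ses_cokernel m')
        exact ShortComplex.isoMk (Iso.refl _) (Iso.refl _) (asIso v).symm (by simp) (by simp)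
      have hcQ : Chain Q (lQ' ++ [Lq]) := Chain.cons _ _ wQ hseQ hcQ'
      refine ⟨lB', lQ' ++ [Lq], hcB, hcQ, ?_, ?_, ?_⟩
      · simp only [List.length_append, List.length_singleton, ← hlen]; omega
      · intro a ha
        obtain ⟨b, hb, hiso⟩ := hisoB a ha
        exact ⟨b, by simp [hb], hiso⟩
      · intro a ha
        rcases List.mem_append.1 ha with ha' | ha'
        · obtain ⟨b, hb, hiso⟩ := hisoQ a ha'
          exact ⟨b, by simp [hb], hiso⟩
        · simp only [List.mem_singleton] at ha'
          exact ⟨a, by simp [ha'], ⟨Iso.refl _⟩⟩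
    · -- u iso : B gets the simple quotient, Q' ≅ Q
      haveI : IsIso u := isIso_of_mono_of_nonzero hu0
      have hv0 : v = 0 := by
        haveI : Epi u := inferInstance
        have h2 : u ≫ v = u ≫ 0 := by rw [huv, comp_zero]
        exact (cancel_epi u).1 h2
      have hDzero : IsZero (cokernel m') := isZero_of_epi_zero v ‹Epi v› hv0
      haveI : Epi m' := by
        apply Pseudoelement.epi_of_pseudo_surjective
        intro q
        have hzq : (cokernel.π m') q = 0 := by
          have h0 : 𝟙 (cokernel m') = 0 := (IsZero.iff_id_eq_zero _).1 hDzero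
          calc (cokernel.π m') q = (cokernel.π m' ≫ 𝟙 _) q := by rw [Category.comp_id]
            _ = (cokernel.π m' ≫ (0 : cokernel m' ⟶ cokernel m')) q := by rw [h0]
            _ = 0 := by rw [comp_zero]; exact Pseudoelement.zero_apply _ _
        exact Pseudoelement.pseudo_exact_of_exact (ses_cokernel m').exact q hzq
      haveI : IsIso m' := isIso_of_mono_of_epi m'
      have hcQ : Chain Q lQ' := chain_iso hcQ' (asIso m')
      have wB : snd' ≫ (cokernel.π snd' ≫ u) = 0 := by
        rw [← Category.assoc, cokernel.condition, zero_comp]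
      have hseB : (ShortComplex.mk snd' (cokernel.π snd' ≫ u) wB).ShortExact := by
        refine ShortComplex.shortExact_of_iso ?_ (ses_cokernel snd')
        exact ShortComplex.isoMk (Iso.refl _) (Iso.refl _) (asIso u) (by simp) (by simp)
      have hcB : Chain B (lB' ++ [Lq]) := Chain.cons _ _ wB hseB hcB'
      refine ⟨lB' ++ [Lq], lQ', hcB, hcQ, ?_, ?_, ?_⟩
      · simp only [List.length_append, List.length_singleton, ← hlen]; omega
      · intro a ha
        rcases List.mem_append.1 ha with ha' | ha'
        · obtain ⟨b, hb, hiso⟩ := hisoB a ha'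
          exact ⟨b, by simp [hb], hiso⟩
        · simp only [List.mem_singleton] at ha'
          exact ⟨a, by simp [ha'], ⟨Iso.refl _⟩⟩
      · intro a ha
        obtain ⟨b, hb, hiso⟩ := hisoQ a ha
        exact ⟨b, by simp [hb], hiso⟩

end Cat3


section Cat4

open ZeroObject

variable {A : Type*} [Category A] [Abelian A]

/-- existence of a composition series (chain with simple quotients) of length `n` -/
def hasSChain (X : A) (n : ℕ) : Prop :=
  ∃ l, Chain X l ∧ (∀ a ∈ l, Simple a) ∧ l.length = n

lemma chain_of_finseries {n : ℕ} (Xo : Fin (n+1) → A)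
    (f : ∀ i : Fin n, Xo i.castSucc ⟶ Xo i.succ) (S : Fin n → A)
    (g : ∀ i, Xo i.succ ⟶ S i) (h0 : IsZero (Xo 0))
    (hses : ∀ i, ∃ w : f i ≫ g i = 0, (ShortComplex.mk (f i) (g i) w).ShortExact)
    (hsimp : ∀ i, Simple (S i)) :
    ∀ j : Fin (n+1), hasSChain (Xo j) (j : ℕ) := by
  intro j
  induction j using Fin.induction with
  | zero => exact ⟨[], Chain.nil _ h0, by simp, rfl⟩
  | succ i ih =>
    obtain ⟨l, hc, hs, hlen⟩ := ih
    obtain ⟨w, hse⟩ := hses i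
    refine ⟨l ++ [S i], Chain.cons (f i) (g i) w hse hc, ?_, by simp [hlen]⟩
    intro a ha
    rcases List.mem_append.1 ha with h | h
    · exact hs a h
    · simp only [List.mem_singleton] at h; subst h; exact hsimp i

attribute [local instance] Classical.propDecidable

variable (hL : ∀ X : A, ∃ n, hasSChain X n)

/-- the minimal length of a composition series -/
noncomputable def ell (X : A) : ℕ := Nat.find (hL X)

lemma ell_spec (X : A) : hasSChain X (ell hL X) := Nat.find_spec (hL X)

lemma ell_le {X : A} {n : ℕ} (h : hasSChain X n) : ell hL X ≤ n :=
  Nat.find_min' (hL X) h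

lemma ell_iso {X Y : A} (e : X ≅ Y) : ell hL X = ell hL Y := by
  apply le_antisymm
  · obtain ⟨l, hc, hs, hlen⟩ := ell_spec hL Y
    exact ell_le hL ⟨l, chain_iso hc e.symm, hs, hlen⟩
  · obtain ⟨l, hc, hs, hlen⟩ := ell_spec hL X
    exact ell_le hL ⟨l, chain_iso hc e, hs, hlen⟩

lemma ell_eq_zero_iff {X : A} : ell hL X = 0 ↔ IsZero X := by
  constructor
  · intro h
    obtain ⟨l, hc, _, hlen⟩ := ell_spec hL X
    rw [h, List.length_eq_zero_iff] at hlen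
    subst hlen
    exact chain_nil_isZero hc
  · intro h
    exact Nat.le_zero.1 (ell_le hL ⟨[], Chain.nil _ h, by simp, rfl⟩)

lemma ell_pos {X : A} (h : ¬ IsZero X) : 1 ≤ ell hL X := by
  rcases Nat.eq_zero_or_pos (ell hL X) with h0 | h1
  · exact absurd ((ell_eq_zero_iff hL).1 h0) h
  · exact h1

lemma sup_ell {B M Q : A} (κ : B ⟶ M) (π : M ⟶ Q) (w : κ ≫ π = 0)
    (hse : (ShortComplex.mk κ π w).ShortExact) :
    ell hL B + ell hL Q ≤ ell hL M := by
  obtain ⟨l, hc, hs, hlen⟩ := ell_spec hL M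
  obtain ⟨lB, lQ, hcB, hcQ, hlen2, hisoB, hisoQ⟩ := sup_chain hc hs κ π w hse
  have hsB : ∀ a ∈ lB, Simple a := by
    intro a ha
    obtain ⟨b, hb, ⟨e⟩⟩ := hisoB a ha
    haveI := hs b hb
    exact Simple.of_iso e
  have hsQ : ∀ a ∈ lQ, Simple a := by
    intro a ha
    obtain ⟨b, hb, ⟨e⟩⟩ := hisoQ a ha
    haveI := hs b hb
    exact Simple.of_iso e
  have h1 : ell hL B ≤ lB.length := ell_le hL ⟨lB, hcB, hsB, rfl⟩
  have h2 : ell hL Q ≤ lQ.length := ell_le hL ⟨lQ, hcQ, hsQ, rfl⟩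
  omega

lemma sum_mem_H : ∀ (l : List ℂ), l ≠ [] → (∀ z ∈ l, z ∈ upperHalfPlaneH) →
    l.sum ∈ upperHalfPlaneH := by
  intro l
  induction l with
  | nil => intro h; exact absurd rfl h
  | cons z l ih =>
    intro _ hmem
    rcases eq_or_ne l [] with rfl | hne
    · simpa using hmem z (by simp)
    · have h1 := hmem z (by simp)
      have h2 := ih hne (fun x hx => hmem x (by simp [hx]))
      simpa using memH_add h1 h2

include hL in
lemma Z_mem_H (Z : A → ℂ)
    (hadd : ∀ (X E Y : A) (f : X ⟶ E) (g : E ⟶ Y) (w : f ≫ g = 0),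
      (ShortComplex.mk f g w).ShortExact → Z E = Z X + Z Y)
    (hsimple : ∀ S : A, Simple S → Z S ∈ upperHalfPlaneH)
    {M : A} (hM : ¬ IsZero M) : Z M ∈ upperHalfPlaneH := by
  obtain ⟨n, l, hc, hs, hlen⟩ := hL M
  have hne : l ≠ [] := by
    intro h; subst h; exact hM (chain_nil_isZero hc)
  rw [chain_Z Z hadd hc]
  apply sum_mem_H
  · simpa using hne
  · intro z hz
    obtain ⟨a, ha, rfl⟩ := List.mem_map.1 hz
    exact hsimple a (hs a ha)

end Cat4


section Cat5

open ZeroObject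

variable {A : Type*} [Category A] [Abelian A]

lemma shortExact_conj {X Y L X' Y' L' : A} {f : X ⟶ Y} {g : Y ⟶ L} {w : f ≫ g = 0}
    (hse : (ShortComplex.mk f g w).ShortExact) (hX : X' = X) (hY : Y' = Y) (hL : L' = L) :
    ∃ w' : (eqToHom hX ≫ f ≫ eqToHom hY.symm) ≫ (eqToHom hY ≫ g ≫ eqToHom hL.symm) = 0,
      (ShortComplex.mk (eqToHom hX ≫ f ≫ eqToHom hY.symm)
        (eqToHom hY ≫ g ≫ eqToHom hL.symm) w').ShortExact := by
  subst hX; subst hY; subst hL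
  simp only [eqToHom_refl, Category.id_comp, Category.comp_id]
  exact ⟨w, hse⟩

lemma chain_toFin (Z : A → ℂ) {M : A} {l : List A} (hc : Chain M l) :
    (∀ a ∈ l, IsSemistable Z a) →
    l.Pairwise (fun a b => phase (Z b) < phase (Z a)) →
    ∃ (k : ℕ) (Mo : Fin (k + 1) → A)
      (f : ∀ i : Fin k, Mo i.castSucc ⟶ Mo i.succ) (L : Fin k → A)
      (g : ∀ i : Fin k, Mo i.succ ⟶ L i),
      IsZero (Mo 0) ∧ Mo (Fin.last k) = M ∧
      (∀ i, ∃ w : f i ≫ g i = 0, (ShortComplex.mk (f i) (g i) w).ShortExact) ∧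
      (∀ i, IsSemistable Z (L i)) ∧
      (∀ i j : Fin k, i < j → phase (Z (L j)) < phase (Z (L i))) ∧
      (∀ i, L i ∈ l) := by
  induction hc with
  | nil X h0 =>
    intro _ _
    exact ⟨0, fun _ => X, fun i => i.elim0, fun i => i.elim0, fun i => i.elim0,
      h0, rfl, fun i => i.elim0, fun i => i.elim0, fun i j _ => i.elim0, fun i => i.elim0⟩
  | cons f₀ g₀ w₀ hse₀ hc ih =>
    rename_i X Y Lnew ls
    intro hss hpw
    have hss' : ∀ a ∈ ls, IsSemistable Z a := fun a ha => hss a (by simp [ha])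
    have hpw' := (List.pairwise_append.1 hpw).1
    have hlt : ∀ a ∈ ls, phase (Z Lnew) < phase (Z a) :=
      fun a ha => (List.pairwise_append.1 hpw).2.2 a ha Lnew (by simp)
    obtain ⟨k, Mo, f, L, g, hz, hlast, hses, hssF, hphF, hmemF⟩ := ih hss' hpw'
    have hMoLast : (Fin.snoc Mo Y : Fin (k+1+1) → A) (Fin.last k).castSucc = X := by
      rw [Fin.snoc_castSucc]; exact hlast
    have hMoTop : (Fin.snoc Mo Y : Fin (k+1+1) → A) ((Fin.last k).succ) = Y := by
      rw [Fin.succ_last, Fin.snoc_last]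
    have hLTop : (Fin.snoc L Lnew : Fin (k+1) → A) (Fin.last k) = Lnew := Fin.snoc_last _ _
    have hmid1 : ∀ j : Fin k,
        (Fin.snoc Mo Y : Fin (k+1+1) → A) ((j.castSucc).castSucc) = Mo j.castSucc :=
      fun j => Fin.snoc_castSucc _ _ _
    have hmid2 : ∀ j : Fin k,
        (Fin.snoc Mo Y : Fin (k+1+1) → A) ((j.castSucc).succ) = Mo j.succ := by
      intro j
      rw [Fin.succ_castSucc, Fin.snoc_castSucc]
    have hmid3 : ∀ j : Fin k,
        (Fin.snoc L Lnew : Fin (k+1) → A) (j.castSucc) = L j :=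
      fun j => Fin.snoc_castSucc _ _ _
    refine ⟨k+1, Fin.snoc Mo Y,
      fun i => Fin.lastCases (motive := fun i : Fin (k+1) =>
          (Fin.snoc Mo Y : Fin (k+1+1) → A) i.castSucc ⟶ (Fin.snoc Mo Y : Fin (k+1+1) → A) i.succ)
        (eqToHom hMoLast ≫ f₀ ≫ eqToHom hMoTop.symm)
        (fun j => eqToHom (hmid1 j) ≫ f j ≫ eqToHom (hmid2 j).symm) i,
      Fin.snoc L Lnew,
      fun i => Fin.lastCases (motive := fun i : Fin (k+1) =>
          (Fin.snoc Mo Y : Fin (k+1+1) → A) i.succ ⟶ (Fin.snoc L Lnew : Fin (k+1) → A) i)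
        (eqToHom hMoTop ≫ g₀ ≫ eqToHom hLTop.symm)
        (fun j => eqToHom (hmid2 j) ≫ g j ≫ eqToHom (hmid3 j).symm) i,
      ?_, ?_, ?_, ?_, ?_, ?_⟩
    · have h0eq : (Fin.snoc Mo Y : Fin (k+1+1) → A) 0 = Mo 0 := by
        rw [show (0 : Fin (k+1+1)) = (0 : Fin (k+1)).castSucc by simp, Fin.snoc_castSucc]
      rw [h0eq]; exact hz
    · exact Fin.snoc_last _ _
    · intro i
      induction i using Fin.lastCases with
      | last =>
        simp only [Fin.lastCases_last]
        exact shortExact_conj hse₀ hMoLast hMoTop hLTop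
      | cast j =>
        simp only [Fin.lastCases_castSucc]
        obtain ⟨w, hse⟩ := hses j
        exact shortExact_conj hse (hmid1 j) (hmid2 j) (hmid3 j)
    · intro i
      induction i using Fin.lastCases with
      | last => rw [hLTop]; exact hss Lnew (by simp)
      | cast j => rw [hmid3 j]; exact hssF j
    · intro i j hij
      induction j using Fin.lastCases with
      | last =>
        have hine : i ≠ Fin.last k := ne_of_lt hij
        obtain ⟨i', rfl⟩ := Fin.exists_castSucc_eq.2 hine
        rw [hLTop, hmid3 i']
        exact hlt (L i') (hmemF i')
      | cast j' =>
        have hine : i ≠ Fin.last k := ne_of_lt (lt_trans hij (Fin.castSucc_lt_last j'))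
        obtain ⟨i', rfl⟩ := Fin.exists_castSucc_eq.2 hine
        rw [hmid3 j', hmid3 i']
        exact hphF i' j' (by simpa using hij)
    · intro i
      induction i using Fin.lastCases with
      | last => rw [hLTop]; simp
      | cast j => rw [hmid3 j]; simp [hmemF j]

end Cat5


section Cat6

open ZeroObject

variable {A : Type*} [Category A] [Abelian A]

lemma finite_lists {V : Set ℂ} (hV : V.Finite) :
    ∀ n : ℕ, Set.Finite {w : List ℂ | w.length ≤ n ∧ ∀ x ∈ w, x ∈ V} := by
  intro n
  induction n with
  | zero =>
    apply Set.Finite.subset (Set.finite_singleton ([] : List ℂ))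
    rintro w ⟨hlen, -⟩
    simpa using List.length_eq_zero_iff.1 (Nat.le_zero.1 hlen)
  | succ n ih =>
    apply Set.Finite.subset
      (Set.Finite.insert ([] : List ℂ)
        ((Set.Finite.prod hV ih).image (fun p : ℂ × List ℂ => p.1 :: p.2)))
    rintro w ⟨hlen, hmem⟩
    cases w with
    | nil => exact Set.mem_insert _ _
    | cons a t =>
      refine Set.mem_insert_of_mem _ ⟨(a, t), ⟨hmem a (by simp), ?_, ?_⟩, rfl⟩
      · simpa using hlen
      · exact fun x hx => hmem x (by simp [hx])

lemma hn_exists (hL : ∀ X : A, ∃ n, hasSChain X n) (Z : A → ℂ)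
    (hadd : ∀ (X E Y : A) (f : X ⟶ E) (g : E ⟶ Y) (w : f ≫ g = 0),
      (ShortComplex.mk f g w).ShortExact → Z E = Z X + Z Y)
    (hsimple : ∀ S : A, Simple S → Z S ∈ upperHalfPlaneH) :
    ∀ (n : ℕ) (M : A), ell hL M ≤ n → ¬ IsZero M →
    ∃ l, Chain M l ∧ (∀ a ∈ l, IsSemistable Z a) ∧
      l.Pairwise (fun a b => phase (Z b) < phase (Z a)) := by
  have hmem : ∀ M : A, ¬IsZero M → Z M ∈ upperHalfPlaneH :=
    fun M h => Z_mem_H hL Z hadd hsimple h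
  intro n
  induction n with
  | zero =>
    intro M h0 hM
    exact absurd (Nat.le_antisymm h0 (Nat.zero_le _)) (by
      intro h
      exact hM ((ell_eq_zero_iff hL).1 h))
  | succ n ih =>
    intro M hn hM
    obtain ⟨l₀, hc₀, hs₀, hlen₀⟩ := ell_spec hL M
    set V : Set ℂ := {z | ∃ a ∈ l₀, z = Z a} with hV
    have hVfin : V.Finite := by
      have h1 : V ⊆ Z '' {a | a ∈ l₀} := by
        rintro z ⟨a, ha, rfl⟩
        exact ⟨a, ha, rfl⟩
      exact Set.Finite.subset (Set.Finite.image Z l₀.finite_toSet) h1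
    have hsub : ∀ (N : A) (ι : N ⟶ M), Mono ι →
        ∃ w : List ℂ, Z N = w.sum ∧ w.length ≤ ell hL M ∧ ∀ x ∈ w, x ∈ V := by
      intro N ι hι
      haveI := hι
      have hse := ses_cokernel ι
      obtain ⟨lB, lQ, hcB, _, hlen2, hisoB, _⟩ :=
        sup_chain hc₀ hs₀ ι (cokernel.π ι) (cokernel.condition ι) hse
      refine ⟨lB.map Z, chain_Z Z hadd hcB, by rw [List.length_map]; omega, ?_⟩
      intro x hx
      obtain ⟨a, ha, rfl⟩ := List.mem_map.1 hx
      obtain ⟨b, hb, ⟨e⟩⟩ := hisoB a ha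
      exact ⟨b, hb, Z_iso Z hadd e⟩
    set SumSet : Set ℂ :=
      {c | ∃ w : List ℂ, c = w.sum ∧ w.length ≤ ell hL M ∧ ∀ x ∈ w, x ∈ V} with hSumSet
    have hSumFin : SumSet.Finite := by
      apply Set.Finite.subset ((finite_lists hVfin (ell hL M)).image List.sum)
      rintro c ⟨w, rfl, h1, h2⟩
      exact ⟨w, ⟨h1, h2⟩, rfl⟩
    set PhSet : Set ℝ :=
      {x | ∃ (N : A) (ι : N ⟶ M), Mono ι ∧ ¬IsZero N ∧ x = phase (Z N)} with hPhSet
    have hPhFin : PhSet.Finite := by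
      apply Set.Finite.subset (hSumFin.image phase)
      rintro x ⟨N, ι, hι, hN0, rfl⟩
      obtain ⟨w, hw1, hw2, hw3⟩ := hsub N ι hι
      exact ⟨Z N, ⟨w, hw1, hw2, hw3⟩, rfl⟩
    have hPhNe : PhSet.Nonempty := ⟨phase (Z M), M, 𝟙 M, inferInstance, hM, rfl⟩
    obtain ⟨φmax, hφmem, hφmax'⟩ := Set.Finite.exists_maximalFor id PhSet hPhFin hPhNe
    have hφmax : ∀ x ∈ PhSet, x ≤ φmax := by
      intro x hx
      rcases le_total x φmax with h | h
      · exact h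
      · exact hφmax' hx h
    set LSet : Set ℕ :=
      {k | ∃ (N : A) (ι : N ⟶ M), Mono ι ∧ ¬IsZero N ∧ phase (Z N) = φmax ∧ ell hL N = k}
      with hLSet
    have hLne : LSet.Nonempty := by
      obtain ⟨N, ι, h1, h2, h3⟩ := hφmem
      exact ⟨ell hL N, N, ι, h1, h2, h3.symm, rfl⟩
    have hLbdd : BddAbove LSet := by
      refine ⟨ell hL M, ?_⟩
      rintro k ⟨N, ι, hι, hN0, -, rfl⟩
      haveI := hι
      have h1 := sup_ell hL ι (cokernel.π ι) (cokernel.condition ι) (ses_cokernel ι)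
      omega
    have hkmem : sSup LSet ∈ LSet := Nat.sSup_mem hLne hLbdd
    obtain ⟨B, ιB, hιB, hB0, hφB, hellB⟩ := hkmem
    haveI := hιB
    have hmax' : ∀ (N : A) (ι : N ⟶ M), Mono ι → ¬IsZero N → phase (Z N) ≤ φmax :=
      fun N ι h1 h2 => hφmax _ ⟨N, ι, h1, h2, rfl⟩
    have hlen' : ∀ (N : A) (ι : N ⟶ M), Mono ι → ¬IsZero N → phase (Z N) = φmax →
        ell hL N ≤ ell hL B := by
      intro N ι h1 h2 h3
      rw [hellB]
      exact le_csSup hLbdd ⟨N, ι, h1, h2, h3, rfl⟩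
    by_cases hMss : phase (Z M) = φmax
    · refine ⟨[M], ?_, ?_, by simp⟩
      · obtain ⟨w, hse⟩ := ses_of_iso (isZero_zero A) (0 : (0:A) ⟶ M) (𝟙 M)
        exact Chain.cons _ _ w hse (Chain.nil _ (isZero_zero A))
      · intro a ha
        simp only [List.mem_singleton] at ha
        subst ha
        refine ⟨hM, fun L f hf hL0 => ?_⟩
        rw [hMss]
        exact hmax' L f hf hL0
    · have hφMlt : phase (Z M) < φmax :=
        lt_of_le_of_ne (hmax' M (𝟙 M) inferInstance hM) hMss
      have hseB := ses_cokernel ιB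
      have hQ0 : ¬ IsZero (cokernel ιB) := by
        intro hQz
        have hπ0 : cokernel.π ιB = 0 := hQz.eq_of_tgt _ _
        haveI : Epi ιB := (ShortComplex.exact_iff_epi _ hπ0).mp hseB.exact
        haveI : IsIso ιB := isIso_of_mono_of_epi ιB
        have hZBM : Z B = Z M := Z_iso Z hadd (asIso ιB)
        rw [← hZBM, hφB] at hφMlt
        exact lt_irrefl _ hφMlt
      have hellQ : ell hL (cokernel ιB) ≤ n := by
        have h1 := sup_ell hL ιB (cokernel.π ιB) (cokernel.condition ιB) hseB
        have h2 := ell_pos hL hB0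
        omega
      obtain ⟨lQ, hcQ, hssQ, hpwQ⟩ := ih (cokernel ιB) hellQ hQ0
      have hchainM : Chain M (B :: lQ) :=
        chain_pullback hcQ ιB (cokernel.π ιB) (cokernel.condition ιB) hseB
      obtain ⟨L0, rest, rfl⟩ : ∃ L0 rest, lQ = L0 :: rest := by
        cases lQ with
        | nil => exact absurd (chain_nil_isZero hcQ) hQ0
        | cons a t => exact ⟨a, t, rfl⟩
      obtain ⟨M₂, m₂, hm₂, hcM₂⟩ :=
        chain_append rest (l₁ := [B, L0]) hchainM
      obtain ⟨X₁, f₁, g₁, w₁, hse₁, hcX₁⟩ := chain_snoc_inv (l := [B]) hcM₂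
      obtain ⟨X₀, f₀, g₀, w₀, hse₀, hcX₀⟩ := chain_snoc_inv (l := []) hcX₁
      have hX₀z : IsZero X₀ := chain_nil_isZero hcX₀
      have hf₀0 : f₀ = 0 := hX₀z.eq_of_src _ _
      haveI : Mono g₀ := (ShortComplex.exact_iff_mono _ hf₀0).mp hse₀.exact
      haveI := hse₀.epi_g
      haveI : IsIso g₀ := isIso_of_mono_of_epi g₀
      have hZX₁ : Z X₁ = Z B := Z_iso Z hadd (asIso g₀)
      have hellX₁ : ell hL X₁ = ell hL B := ell_iso hL (asIso g₀)
      haveI := hse₁.mono_f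
      have hL0ss : IsSemistable Z L0 := hssQ L0 (by simp)
      have hL00 : ¬ IsZero L0 := hL0ss.1
      have hX₁0 : ¬ IsZero X₁ := fun h => hB0 (IsZero.of_iso h (asIso g₀).symm)
      have hM₂0 : ¬ IsZero M₂ := fun h => hX₁0 (IsZero.of_mono f₁ h)
      have hZM₂ : Z M₂ = Z B + Z L0 := by
        rw [hadd _ _ _ _ _ w₁ hse₁, hZX₁]
      have hZB : Z B ∈ upperHalfPlaneH := hmem B hB0
      have hZL0 : Z L0 ∈ upperHalfPlaneH := hmem L0 hL00
      have hφM₂ : phase (Z M₂) ≤ φmax := hmax' M₂ m₂ hm₂ hM₂0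
      have hkey : phase (Z L0) < phase (Z B) := by
        rcases lt_trichotomy (phase (Z L0)) (phase (Z B)) with h | h | h
        · exact h
        · exfalso
          have he : phase (Z M₂) = phase (Z B) := by
            rw [hZM₂]; exact phase_add_eq hZB hZL0 h.symm
          have h2 : phase (Z M₂) = φmax := by rw [he, hφB]
          have h3 := hlen' M₂ m₂ hm₂ hM₂0 h2
          have h4 := sup_ell hL f₁ g₁ w₁ hse₁
          have h5 := ell_pos hL hL00
          rw [hellX₁] at h4
          omega
        · exfalso
          have hlt : phase (Z B) < phase (Z M₂) := by
            rw [hZM₂]; exact phase_lt_add hZB hZL0 h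
          rw [hφB] at hlt
          linarith
      refine ⟨B :: L0 :: rest, hchainM, ?_, ?_⟩
      · intro a ha
        rcases List.mem_cons.1 ha with rfl | ha'
        · refine ⟨hB0, fun L f hf hL0' => ?_⟩
          haveI := hf
          rw [hφB]
          exact hmax' L (f ≫ ιB) (mono_comp f ιB) hL0'
        · exact hssQ a ha'
      · refine List.Pairwise.cons ?_ hpwQ
        intro a ha
        rcases List.mem_cons.1 ha with rfl | ha'
        · exact hkey
        · have h1 : phase (Z a) < phase (Z L0) := (List.pairwise_cons.1 hpwQ).1 a ha'
          linarith

end Cat6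

end HNAux

/-- let `A` be an abelian length category with finitely many simples up to
isomorphism, and let `Z` be additive on short exact sequences with `Z(S) ∈ ℍ` for every
simple `S`. Then (i) `Z(M) ∈ ℍ` for every nonzero `M`, i.e. `Z` is a stability function,
and (ii) `Z` has the HN-property: every nonzero `M` has a filtration by subobjects whose
successive quotients are `Z`-semistable of strictly decreasing phases. -/
theorem statement_12
    (hlength : ∀ X : A, ∃ (n : ℕ) (Xo : Fin (n + 1) → A)
      (f : ∀ i : Fin n, Xo i.castSucc ⟶ Xo i.succ) (S : Fin n → A)
      (g : ∀ i : Fin n, Xo i.succ ⟶ S i),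
      IsZero (Xo 0) ∧ Xo (Fin.last n) = X ∧
      (∀ i, ∃ w : f i ≫ g i = 0, (ShortComplex.mk (f i) (g i) w).ShortExact) ∧
      (∀ i, Simple (S i)))
    (hfin : ∃ (n : ℕ) (S : Fin n → A), (∀ i, Simple (S i)) ∧
      ∀ X : A, Simple X → ∃ i, Nonempty (X ≅ S i))
    (Z : A → ℂ)
    (hadd : ∀ (X E Y : A) (f : X ⟶ E) (g : E ⟶ Y) (w : f ≫ g = 0),
      (ShortComplex.mk f g w).ShortExact → Z E = Z X + Z Y)
    (hsimple : ∀ S : A, Simple S → Z S ∈ upperHalfPlaneH) :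
    (∀ M : A, ¬ IsZero M → Z M ∈ upperHalfPlaneH) ∧
    (∀ M : A, ¬ IsZero M → ∃ (k : ℕ) (Mo : Fin (k + 1) → A)
      (f : ∀ i : Fin k, Mo i.castSucc ⟶ Mo i.succ) (L : Fin k → A)
      (g : ∀ i : Fin k, Mo i.succ ⟶ L i),
      IsZero (Mo 0) ∧ Mo (Fin.last k) = M ∧
      (∀ i, ∃ w : f i ≫ g i = 0, (ShortComplex.mk (f i) (g i) w).ShortExact) ∧
      (∀ i, IsSemistable Z (L i)) ∧
      (∀ i j : Fin k, i < j → phase (Z (L j)) < phase (Z (L i)))) := by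
  
  have hL : ∀ X : A, ∃ n, HNAux.hasSChain X n := by
    intro X
    obtain ⟨n, Xo, f, S, g, h0, hlast, hses, hsimp⟩ := hlength X
    have h := HNAux.chain_of_finseries Xo f S g h0 hses hsimp (Fin.last n)
    rw [hlast] at h
    exact ⟨n, h⟩
  constructor
  · intro M hM
    exact HNAux.Z_mem_H hL Z hadd hsimple hM
  · intro M hM
    obtain ⟨l, hc, hss, hpw⟩ :=
      HNAux.hn_exists hL Z hadd hsimple (HNAux.ell hL M) M le_rfl hM
    obtain ⟨k, Mo, f, L, g, h0, hlast, hses, hss', hph, -⟩ :=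
      HNAux.chain_toFin Z hc hss hpw
    exact ⟨k, Mo, f, L, g, h0, hlast, hses, hss', hph⟩
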